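/- Let (X_j)_{j∈ℤ} be identically distributed zero-mean H-valued random elements with E[‖X_0‖²] < ∞, whose common covariance operator C_X(y) = E[⟨X_0, y⟩ X_0] admits an orthonormal basis of eigenfunctions (ν_i)_{i∈ℕ} of H with C_X ν_i = λ_i ν_i. For d ∈ ℕ let P_d denote the orthogonal projection of H onto span(ν_1,…,ν_d). Let (π_ℓ)_{ℓ≥1} be bounded linear operators on H with Σ_{ℓ=1}^∞ ‖π_ℓ‖_L < ∞, let k ≥ 1 and d_1, …, d_k ∈ ℕ, and assume the series Σ_{ℓ>k} π_ℓ X_{1−ℓ} converges in L²_H. Then E[ ‖ Σ_{ℓ>k} π_ℓ X_{1−ℓ} + Σ_{ℓ=1}^k π_ℓ (I − P_{d_{k+1−ℓ}}) X_{1−ℓ} ‖² ] ≤ 2 (Σ_{ℓ>k} ‖π_ℓ‖_L)² · E[‖X_0‖²] + 2 (Σ_{ℓ=1}^k ‖π_ℓ‖_L) · ( Σ_{ℓ=1}^k ‖π_ℓ‖_L Σ_{i > d_{k+1−ℓ}} λ_i ). -/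

import Mathlib

open MeasureTheory
open scoped InnerProductSpace

/-- Orthogonal projection onto the span of the first `d` members of an orthonormal family:
`P_d x = Σ_{i<d} ⟨ν_i, x⟩ ν_i`. -/
noncomputable def projSpan {H : Type*} [NormedAddCommGroup H] [InnerProductSpace ℝ H]
    (ν : ℕ → H) (d : ℕ) (x : H) : H :=
  ∑ i ∈ Finset.range d, ⟪ν i, x⟫_ℝ • ν i

section aux
variable {H : Type*} [NormedAddCommGroup H] [InnerProductSpace ℝ H] [CompleteSpace H]

/-- The residual `x ↦ x - projSpan ν D x` as a continuous linear map. -/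
noncomputable def residCLM (ν : ℕ → H) (D : ℕ) : H →L[ℝ] H :=
  ContinuousLinearMap.id ℝ H - ∑ i ∈ Finset.range D, (innerSL ℝ (ν i)).smulRight (ν i)

lemma residCLM_apply (ν : ℕ → H) (D : ℕ) (x : H) :
    residCLM ν D x = x - projSpan ν D x := by
  simp [residCLM, projSpan, ContinuousLinearMap.sum_apply]

omit [CompleteSpace H] in
lemma inner_residual {ν : ℕ → H} (hν : Orthonormal ℝ ν) (D : ℕ) (x : H) (i : ℕ) :
    ⟪ν i, x - projSpan ν D x⟫_ℝ = if i < D then 0 else ⟪ν i, x⟫_ℝ := by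
  rw [inner_sub_right, projSpan, inner_sum]
  simp_rw [real_inner_smul_right, orthonormal_iff_ite.mp hν, mul_ite, mul_one, mul_zero,
    Finset.sum_ite_eq (Finset.range D) i (fun j => ⟪ν j, x⟫_ℝ)]
  by_cases h : i < D
  · simp [h, Finset.mem_range]
  · simp [h, Finset.mem_range]

lemma parseval {ν : ℕ → H} (hν : Orthonormal ℝ ν)
    (hcomp : (Submodule.span ℝ (Set.range ν)).topologicalClosure = ⊤) (x : H) :
    HasSum (fun i => ⟪ν i, x⟫_ℝ ^ 2) (‖x‖ ^ 2) := by
  let b : HilbertBasis ℕ ℝ H := HilbertBasis.mk hν (le_of_eq hcomp.symm)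
  have h := b.hasSum_inner_mul_inner x x
  rw [real_inner_self_eq_norm_sq] at h
  refine h.congr_fun fun i => ?_
  have hb : (b : ℕ → H) i = ν i := by rw [HilbertBasis.coe_mk]
  rw [hb, real_inner_comm x (ν i), sq]

lemma residual_parseval {ν : ℕ → H} (hν : Orthonormal ℝ ν)
    (hcomp : (Submodule.span ℝ (Set.range ν)).topologicalClosure = ⊤) (D : ℕ) (x : H) :
    HasSum (fun i => ⟪ν (D + i), x⟫_ℝ ^ 2) (‖x - projSpan ν D x‖ ^ 2) := by
  have h := parseval hν hcomp (x - projSpan ν D x)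
  have h2 := (hasSum_nat_add_iff' (f := fun i => ⟪ν i, x - projSpan ν D x⟫_ℝ ^ 2) D).2 h
  have hz : ∑ i ∈ Finset.range D, ⟪ν i, x - projSpan ν D x⟫_ℝ ^ 2 = 0 := by
    refine Finset.sum_eq_zero fun i hi => ?_
    rw [inner_residual hν, if_pos (Finset.mem_range.mp hi)]
    ring
  rw [hz, sub_zero] at h2
  refine h2.congr_fun fun i => ?_
  rw [inner_residual hν, if_neg (by omega), Nat.add_comm]

omit [CompleteSpace H] in
lemma weighted_cs {ι : Type*} (s : Finset ι) (b c : ι → ℝ) (hb : ∀ i ∈ s, 0 ≤ b i) :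
    (∑ i ∈ s, b i * c i) ^ 2 ≤ (∑ i ∈ s, b i) * ∑ i ∈ s, b i * c i ^ 2 := by
  have h := Finset.sum_mul_sq_le_sq_mul_sq s (fun i => Real.sqrt (b i))
    (fun i => Real.sqrt (b i) * c i)
  calc (∑ i ∈ s, b i * c i) ^ 2
      = (∑ i ∈ s, Real.sqrt (b i) * (Real.sqrt (b i) * c i)) ^ 2 := by
        congr 1; refine Finset.sum_congr rfl fun i hi => ?_
        rw [← mul_assoc, Real.mul_self_sqrt (hb i hi)]
    _ ≤ (∑ i ∈ s, Real.sqrt (b i) ^ 2) * ∑ i ∈ s, (Real.sqrt (b i) * c i) ^ 2 := h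
    _ = (∑ i ∈ s, b i) * ∑ i ∈ s, b i * c i ^ 2 := by
        congr 1
        · exact Finset.sum_congr rfl fun i hi => Real.sq_sqrt (hb i hi)
        · refine Finset.sum_congr rfl fun i hi => ?_
          rw [mul_pow, Real.sq_sqrt (hb i hi)]

end aux

/-- For an identically distributed, zero-mean, square-integrable sequence
`(X_j)` whose covariance operator has eigenbasis `(ν_i)` with eigenvalues `(λ_i)`, summable
operators `(π_ℓ)_{ℓ≥1}`, `k ≥ 1`, dimensions `d_1, …, d_k`, and `S = Σ_{ℓ>k} π_ℓ X_{1−ℓ}`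
(converging a.s./in L²), one has
`E‖S + Σ_{ℓ=1}^k π_ℓ (I − P_{d_{k+1−ℓ}}) X_{1−ℓ}‖² ≤
  2 (Σ_{ℓ>k} ‖π_ℓ‖)² E‖X_0‖² + 2 (Σ_{ℓ=1}^k ‖π_ℓ‖)(Σ_{ℓ=1}^k ‖π_ℓ‖ Σ_{i>d_{k+1−ℓ}} λ_i)`. -/
theorem innovation_residual_L2_bound
    {H : Type*} [NormedAddCommGroup H] [InnerProductSpace ℝ H] [CompleteSpace H]
    [SecondCountableTopology H] [MeasurableSpace H] [BorelSpace H]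
    {Ω : Type*} [MeasurableSpace Ω] (μ : Measure Ω) [IsProbabilityMeasure μ]
    (X : ℤ → Ω → H) (hXmeas : ∀ j, Measurable (X j))
    (hident : ∀ j : ℤ, Measure.map (X j) μ = Measure.map (X 0) μ)
    (hmean : ∫ ω, X 0 ω ∂μ = 0)
    (hmom : MemLp (X 0) 2 μ)
    (ν : ℕ → H) (hν : Orthonormal ℝ ν)
    (hcomp : (Submodule.span ℝ (Set.range ν)).topologicalClosure = ⊤)
    (Λ : ℕ → ℝ)
    (hcov : ∀ i : ℕ, (∫ ω, ⟪X 0 ω, ν i⟫_ℝ • X 0 ω ∂μ) = Λ i • ν i)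
    (π : ℕ → H →L[ℝ] H) (hπ : Summable fun ℓ : ℕ => ‖π (ℓ + 1)‖)
    (k : ℕ) (hk : 1 ≤ k) (d : ℕ → ℕ)
    (S : Ω → H) (hS2 : MemLp S 2 μ)
    (hS : ∀ᵐ ω ∂μ, HasSum (fun ℓ : ℕ => π (k + 1 + ℓ) (X (1 - ((k : ℤ) + 1 + ℓ)) ω)) (S ω)) :
    ∫ ω, ‖S ω + ∑ ℓ ∈ Finset.Icc 1 k,
          π ℓ (X (1 - (ℓ : ℤ)) ω - projSpan ν (d (k + 1 - ℓ)) (X (1 - (ℓ : ℤ)) ω))‖ ^ 2 ∂μ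
      ≤ 2 * (∑' ℓ : ℕ, ‖π (k + 1 + ℓ)‖) ^ 2 * ∫ ω, ‖X 0 ω‖ ^ 2 ∂μ
        + 2 * (∑ ℓ ∈ Finset.Icc 1 k, ‖π ℓ‖) *
            (∑ ℓ ∈ Finset.Icc 1 k, ‖π ℓ‖ * ∑' i : ℕ, Λ (d (k + 1 - ℓ) + i)) := by
  classical
  -- Abbreviations
  set m : ℝ := ∫ ω, ‖X 0 ω‖ ^ 2 ∂μ with hm
  set A : ℝ := ∑' ℓ : ℕ, ‖π (k + 1 + ℓ)‖ with hA
  set B : ℝ := ∑ ℓ ∈ Finset.Icc 1 k, ‖π ℓ‖ with hB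
  set T : Ω → H := fun ω => ∑ ℓ ∈ Finset.Icc 1 k,
      π ℓ (X (1 - (ℓ : ℤ)) ω - projSpan ν (d (k + 1 - ℓ)) (X (1 - (ℓ : ℤ)) ω)) with hT
  have hm0 : 0 ≤ m := integral_nonneg fun ω => by positivity
  have hB0 : 0 ≤ B := Finset.sum_nonneg fun ℓ _ => norm_nonneg _
  -- Summability of operator norms of the tail
  have hsummA : Summable (fun ℓ : ℕ => ‖π (k + 1 + ℓ)‖) := by
    refine ((summable_nat_add_iff k).mpr hπ).congr fun n => ?_
    congr 2
    omega
  have hA0 : 0 ≤ A := tsum_nonneg fun ℓ => norm_nonneg _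
  have hApartial : ∀ n, ∑ ℓ ∈ Finset.range n, ‖π (k + 1 + ℓ)‖ ≤ A := fun n =>
    Summable.sum_le_tsum _ (fun i _ => norm_nonneg _) hsummA
  -- Square-integrability of inner products
  have hinner2 : ∀ i, MemLp (fun ω => ⟪ν i, X 0 ω⟫_ℝ) 2 μ := fun i => hmom.const_inner (ν i)
  have hIntInner : ∀ i, Integrable (fun ω => ⟪ν i, X 0 ω⟫_ℝ ^ 2) μ := fun i =>
    (hinner2 i).integrable_sq
  have hIntX2 : Integrable (fun ω => ‖X 0 ω‖ ^ 2) μ := hmom.norm.integrable_sq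
  -- Identification of the eigenvalues
  have hΛeq : ∀ i, Λ i = ∫ ω, ⟪ν i, X 0 ω⟫_ℝ ^ 2 ∂μ := by
    intro i
    have hφ : MemLp (fun ω => ⟪X 0 ω, ν i⟫_ℝ) 2 μ := by
      have heq : (fun ω => ⟪X 0 ω, ν i⟫_ℝ) = fun ω => ⟪ν i, X 0 ω⟫_ℝ :=
        funext fun ω => real_inner_comm _ _
      rw [heq]; exact hinner2 i
    have hfint : Integrable (fun ω => ⟪X 0 ω, ν i⟫_ℝ • X 0 ω) μ := by
      have h := (hmom.smul hφ (p := 2) (q := 2) (r := 1))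
      exact memLp_one_iff_integrable.mp h
    have h := integral_inner (𝕜 := ℝ) hfint (ν i)
    rw [hcov i] at h
    have hrhs : ⟪ν i, Λ i • ν i⟫_ℝ = Λ i := by
      rw [real_inner_smul_right, real_inner_self_eq_norm_sq, hν.1 i]
      ring
    have hlhs : ∀ ω, ⟪ν i, ⟪X 0 ω, ν i⟫_ℝ • X 0 ω⟫_ℝ = ⟪ν i, X 0 ω⟫_ℝ ^ 2 := by
      intro ω
      rw [real_inner_smul_right, real_inner_comm (X 0 ω) (ν i), sq]
    rw [hrhs] at h
    rw [← h]
    exact integral_congr_ae (Filter.Eventually.of_forall fun ω => (hlhs ω))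
  have hΛ0 : ∀ i, 0 ≤ Λ i := fun i => by
    rw [hΛeq i]; exact integral_nonneg fun ω => sq_nonneg _
  -- Summability of the eigenvalues (Bessel)
  have hΛsum : Summable Λ := by
    refine summable_of_sum_range_le (c := m) hΛ0 fun n => ?_
    have h1 : ∑ i ∈ Finset.range n, Λ i
        = ∫ ω, ∑ i ∈ Finset.range n, ⟪ν i, X 0 ω⟫_ℝ ^ 2 ∂μ := by
      rw [integral_finset_sum _ fun i _ => hIntInner i]
      exact Finset.sum_congr rfl fun i _ => hΛeq i
    rw [h1]
    refine integral_mono (integrable_finset_sum _ fun i _ => hIntInner i) hIntX2 fun ω => ?_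
    exact sum_le_hasSum _ (fun i _ => sq_nonneg _) (parseval hν hcomp (X 0 ω))
  have hσsum : ∀ D, Summable fun i => Λ (D + i) := by
    intro D
    refine ((summable_nat_add_iff D).mpr hΛsum).congr fun n => ?_
    rw [Nat.add_comm]
  have hσ0 : ∀ D : ℕ, 0 ≤ ∑' i, Λ (D + i) := fun D => tsum_nonneg fun i => hΛ0 _
  -- Transfer of lower integrals via identical distribution
  have hlmap : ∀ (j : ℤ) (g : H → ENNReal), Measurable g →
      ∫⁻ ω, g (X j ω) ∂μ = ∫⁻ ω, g (X 0 ω) ∂μ := by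
    intro j g hg
    rw [← lintegral_map hg (hXmeas j), hident j, lintegral_map hg (hXmeas 0)]
  -- second moment of each X j
  have hX2lin : ∀ j : ℤ, ∫⁻ ω, ENNReal.ofReal (‖X j ω‖ ^ 2) ∂μ = ENNReal.ofReal m := by
    intro j
    have hg : Measurable fun x : H => ENNReal.ofReal (‖x‖ ^ 2) :=
      (measurable_norm.pow_const 2).ennreal_ofReal
    rw [hlmap j _ hg, ← ofReal_integral_eq_lintegral_ofReal hIntX2
      (Filter.Eventually.of_forall fun ω => by positivity)]
  -- second moment of the residuals
  have hresid : ∀ (j : ℤ) (D : ℕ),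
      ∫⁻ ω, ENNReal.ofReal (‖X j ω - projSpan ν D (X j ω)‖ ^ 2) ∂μ
        = ENNReal.ofReal (∑' i, Λ (D + i)) := by
    intro j D
    have hcontr : Continuous fun x : H => x - projSpan ν D x := by
      have : (fun x : H => x - projSpan ν D x) = ⇑(residCLM ν D) :=
        funext fun x => (residCLM_apply ν D x).symm
      rw [this]; exact (residCLM ν D).continuous
    have hg : Measurable fun x : H => ENNReal.ofReal (‖x - projSpan ν D x‖ ^ 2) :=
      (hcontr.norm.pow 2).measurable.ennreal_ofReal
    rw [hlmap j _ hg]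
    have hpt : ∀ x : H, ENNReal.ofReal (‖x - projSpan ν D x‖ ^ 2)
        = ∑' i, ENNReal.ofReal (⟪ν (D + i), x⟫_ℝ ^ 2) := by
      intro x
      have h := residual_parseval hν hcomp D x
      rw [← h.tsum_eq, ENNReal.ofReal_tsum_of_nonneg (fun i => sq_nonneg _) h.summable]
    simp_rw [hpt]
    rw [lintegral_tsum fun i => ((measurable_const.inner (hXmeas 0)).pow_const 2).ennreal_ofReal.aemeasurable]
    have heach : ∀ i' : ℕ, ∫⁻ ω, ENNReal.ofReal (⟪ν i', X 0 ω⟫_ℝ ^ 2) ∂μ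
        = ENNReal.ofReal (Λ i') := by
      intro i'
      rw [← ofReal_integral_eq_lintegral_ofReal (hIntInner i')
        (Filter.Eventually.of_forall fun ω => sq_nonneg _), ← hΛeq i']
    simp_rw [heach]
    rw [← ENNReal.ofReal_tsum_of_nonneg (fun i => hΛ0 _) (hσsum D)]
  -- Bound for the tail series S
  have hSbound : ∫⁻ ω, ENNReal.ofReal (‖S ω‖ ^ 2) ∂μ ≤ ENNReal.ofReal (A ^ 2 * m) := by
    set Sn : ℕ → Ω → H := fun n ω => ∑ ℓ ∈ Finset.range n,
        π (k + 1 + ℓ) (X (1 - ((k : ℤ) + 1 + ℓ)) ω) with hSn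
    have hSnmeas : ∀ n, Measurable (Sn n) := fun n =>
      Finset.measurable_sum _ fun ℓ _ => ((π (k + 1 + ℓ)).continuous.measurable).comp (hXmeas _)
    have hFmeas : ∀ n, Measurable fun ω => ENNReal.ofReal (‖Sn n ω‖ ^ 2) := fun n =>
      ((hSnmeas n).norm.pow_const 2).ennreal_ofReal
    have hlSn : ∀ n, ∫⁻ ω, ENNReal.ofReal (‖Sn n ω‖ ^ 2) ∂μ
        ≤ ENNReal.ofReal A * (ENNReal.ofReal A * ENNReal.ofReal m) := by
      intro n
      have hpt : ∀ ω, ‖Sn n ω‖ ^ 2 ≤ ∑ ℓ ∈ Finset.range n,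
          A * (‖π (k + 1 + ℓ)‖ * ‖X (1 - ((k : ℤ) + 1 + ℓ)) ω‖ ^ 2) := by
        intro ω
        rw [← Finset.mul_sum]
        have h1 : ‖Sn n ω‖ ≤ ∑ ℓ ∈ Finset.range n,
            ‖π (k + 1 + ℓ)‖ * ‖X (1 - ((k : ℤ) + 1 + ℓ)) ω‖ :=
          (norm_sum_le _ _).trans (Finset.sum_le_sum fun ℓ _ =>
            ContinuousLinearMap.le_opNorm _ _)
        refine (pow_le_pow_left₀ (norm_nonneg _) h1 2).trans ?_
        refine (weighted_cs _ _ _ fun ℓ _ => norm_nonneg _).trans ?_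
        exact mul_le_mul_of_nonneg_right (hApartial n)
          (Finset.sum_nonneg fun ℓ _ => by positivity)
      calc ∫⁻ ω, ENNReal.ofReal (‖Sn n ω‖ ^ 2) ∂μ
          ≤ ∫⁻ ω, ∑ ℓ ∈ Finset.range n, ENNReal.ofReal A *
              (ENNReal.ofReal ‖π (k + 1 + ℓ)‖ *
               ENNReal.ofReal (‖X (1 - ((k : ℤ) + 1 + ℓ)) ω‖ ^ 2)) ∂μ := by
            refine lintegral_mono fun ω => (ENNReal.ofReal_le_ofReal (hpt ω)).trans ?_
            rw [ENNReal.ofReal_sum_of_nonneg (fun ℓ _ => by positivity)]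
            refine Finset.sum_le_sum fun ℓ _ => le_of_eq ?_
            rw [ENNReal.ofReal_mul hA0, ENNReal.ofReal_mul (norm_nonneg _)]
        _ = ∑ ℓ ∈ Finset.range n, ENNReal.ofReal A *
              (ENNReal.ofReal ‖π (k + 1 + ℓ)‖ * ENNReal.ofReal m) := by
            rw [lintegral_finset_sum _ (fun ℓ _ => Measurable.const_mul
              (Measurable.const_mul (((hXmeas _).norm.pow_const 2).ennreal_ofReal) _) _)]
            refine Finset.sum_congr rfl fun ℓ _ => ?_
            rw [lintegral_const_mul' _ _ ENNReal.ofReal_ne_top,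
                lintegral_const_mul' _ _ ENNReal.ofReal_ne_top, hX2lin]
        _ ≤ ENNReal.ofReal A * (ENNReal.ofReal A * ENNReal.ofReal m) := by
            rw [← Finset.mul_sum, ← Finset.sum_mul,
                ← ENNReal.ofReal_sum_of_nonneg (fun ℓ _ => norm_nonneg _)]
            exact mul_le_mul_right
              (mul_le_mul_left (ENNReal.ofReal_le_ofReal (hApartial n)) _) _
    have hae : ∀ᵐ ω ∂μ, ENNReal.ofReal (‖S ω‖ ^ 2)
        = Filter.liminf (fun n => ENNReal.ofReal (‖Sn n ω‖ ^ 2)) Filter.atTop := by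
      refine hS.mono fun ω h => ?_
      have ht2 : Filter.Tendsto (fun n => ENNReal.ofReal (‖Sn n ω‖ ^ 2)) Filter.atTop
          (nhds (ENNReal.ofReal (‖S ω‖ ^ 2))) :=
        (ENNReal.continuous_ofReal.tendsto _).comp ((h.tendsto_sum_nat.norm).pow 2)
      exact ht2.liminf_eq.symm
    calc ∫⁻ ω, ENNReal.ofReal (‖S ω‖ ^ 2) ∂μ
        = ∫⁻ ω, Filter.liminf (fun n => ENNReal.ofReal (‖Sn n ω‖ ^ 2)) Filter.atTop ∂μ :=
          lintegral_congr_ae hae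
      _ ≤ Filter.liminf (fun n => ∫⁻ ω, ENNReal.ofReal (‖Sn n ω‖ ^ 2) ∂μ) Filter.atTop :=
          lintegral_liminf_le hFmeas
      _ ≤ Filter.liminf (fun _ : ℕ =>
            ENNReal.ofReal A * (ENNReal.ofReal A * ENNReal.ofReal m)) Filter.atTop :=
          Filter.liminf_le_liminf (Filter.Eventually.of_forall hlSn)
      _ = ENNReal.ofReal A * (ENNReal.ofReal A * ENNReal.ofReal m) := Filter.liminf_const _
      _ = ENNReal.ofReal (A ^ 2 * m) := by
          rw [← ENNReal.ofReal_mul hA0, ← ENNReal.ofReal_mul hA0]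
          congr 1
          ring
  -- Bound for the truncation term T
  have hymeas : ∀ (j : ℤ) (D : ℕ), Measurable fun ω => X j ω - projSpan ν D (X j ω) := by
    intro j D
    have heq : (fun ω => X j ω - projSpan ν D (X j ω)) = fun ω => residCLM ν D (X j ω) :=
      funext fun ω => (residCLM_apply ν D (X j ω)).symm
    rw [heq]
    exact (residCLM ν D).continuous.measurable.comp (hXmeas j)
  have hTbound : ∫⁻ ω, ENNReal.ofReal (‖T ω‖ ^ 2) ∂μ
      ≤ ENNReal.ofReal (B * ∑ ℓ ∈ Finset.Icc 1 k, ‖π ℓ‖ * ∑' i, Λ (d (k + 1 - ℓ) + i)) := by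
    have hTpt : ∀ ω, ‖T ω‖ ^ 2 ≤ ∑ ℓ ∈ Finset.Icc 1 k, B * (‖π ℓ‖ *
        ‖X (1 - (ℓ : ℤ)) ω - projSpan ν (d (k + 1 - ℓ)) (X (1 - (ℓ : ℤ)) ω)‖ ^ 2) := by
      intro ω
      rw [← Finset.mul_sum]
      have h1 : ‖T ω‖ ≤ ∑ ℓ ∈ Finset.Icc 1 k, ‖π ℓ‖ *
          ‖X (1 - (ℓ : ℤ)) ω - projSpan ν (d (k + 1 - ℓ)) (X (1 - (ℓ : ℤ)) ω)‖ :=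
        (norm_sum_le _ _).trans (Finset.sum_le_sum fun ℓ _ =>
          ContinuousLinearMap.le_opNorm _ _)
      exact (pow_le_pow_left₀ (norm_nonneg _) h1 2).trans
        (weighted_cs _ _ _ fun ℓ _ => norm_nonneg _)
    calc ∫⁻ ω, ENNReal.ofReal (‖T ω‖ ^ 2) ∂μ
        ≤ ∫⁻ ω, ∑ ℓ ∈ Finset.Icc 1 k, ENNReal.ofReal B * (ENNReal.ofReal ‖π ℓ‖ *
            ENNReal.ofReal
              (‖X (1 - (ℓ : ℤ)) ω - projSpan ν (d (k + 1 - ℓ)) (X (1 - (ℓ : ℤ)) ω)‖ ^ 2)) ∂μ := by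
          refine lintegral_mono fun ω => (ENNReal.ofReal_le_ofReal (hTpt ω)).trans ?_
          rw [ENNReal.ofReal_sum_of_nonneg (fun ℓ _ => by positivity)]
          refine Finset.sum_le_sum fun ℓ _ => le_of_eq ?_
          rw [ENNReal.ofReal_mul hB0, ENNReal.ofReal_mul (norm_nonneg _)]
      _ = ∑ ℓ ∈ Finset.Icc 1 k, ENNReal.ofReal B * (ENNReal.ofReal ‖π ℓ‖ *
            ENNReal.ofReal (∑' i, Λ (d (k + 1 - ℓ) + i))) := by
          rw [lintegral_finset_sum _ (fun ℓ _ => Measurable.const_mul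
            (Measurable.const_mul (((hymeas _ _).norm.pow_const 2).ennreal_ofReal) _) _)]
          refine Finset.sum_congr rfl fun ℓ _ => ?_
          rw [lintegral_const_mul' _ _ ENNReal.ofReal_ne_top,
              lintegral_const_mul' _ _ ENNReal.ofReal_ne_top, hresid]
      _ = ENNReal.ofReal (B * ∑ ℓ ∈ Finset.Icc 1 k, ‖π ℓ‖ * ∑' i, Λ (d (k + 1 - ℓ) + i)) := by
          rw [← Finset.mul_sum, ENNReal.ofReal_mul hB0,
              ENNReal.ofReal_sum_of_nonneg (fun ℓ _ => mul_nonneg (norm_nonneg _) (hσ0 _))]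
          congr 1
          refine Finset.sum_congr rfl fun ℓ _ => ?_
          rw [ENNReal.ofReal_mul (norm_nonneg _)]
  -- Assembly
  have hSig0 : 0 ≤ ∑ ℓ ∈ Finset.Icc 1 k, ‖π ℓ‖ * ∑' i, Λ (d (k + 1 - ℓ) + i) :=
    Finset.sum_nonneg fun ℓ _ => mul_nonneg (norm_nonneg _) (hσ0 _)
  have hc1 : 0 ≤ 2 * (A ^ 2 * m) := by positivity
  have hc2 : 0 ≤ 2 * (B * ∑ ℓ ∈ Finset.Icc 1 k, ‖π ℓ‖ * ∑' i, Λ (d (k + 1 - ℓ) + i)) := by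
    have := mul_nonneg hB0 hSig0
    linarith
  have hptfinal : ∀ ω, ENNReal.ofReal (‖S ω + T ω‖ ^ 2)
      ≤ ENNReal.ofReal 2 * ENNReal.ofReal (‖S ω‖ ^ 2)
        + ENNReal.ofReal 2 * ENNReal.ofReal (‖T ω‖ ^ 2) := by
    intro ω
    have h : ‖S ω + T ω‖ ^ 2 ≤ 2 * ‖S ω‖ ^ 2 + 2 * ‖T ω‖ ^ 2 := by
      have h0 := pow_le_pow_left₀ (norm_nonneg (S ω + T ω)) (norm_add_le (S ω) (T ω)) 2
      nlinarith [h0, sq_nonneg (‖S ω‖ - ‖T ω‖)]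
    refine (ENNReal.ofReal_le_ofReal h).trans (le_of_eq ?_)
    rw [ENNReal.ofReal_add (by positivity) (by positivity),
        ENNReal.ofReal_mul (by norm_num), ENNReal.ofReal_mul (by norm_num)]
  have hSaem : AEMeasurable (fun ω => ENNReal.ofReal (‖S ω‖ ^ 2)) μ :=
    ((hS2.aestronglyMeasurable.norm.aemeasurable.pow_const 2).ennreal_ofReal)
  have hmain : ∫⁻ ω, ENNReal.ofReal (‖S ω + T ω‖ ^ 2) ∂μ
      ≤ ENNReal.ofReal (2 * (A ^ 2 * m)
          + 2 * (B * ∑ ℓ ∈ Finset.Icc 1 k, ‖π ℓ‖ * ∑' i, Λ (d (k + 1 - ℓ) + i))) := by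
    calc ∫⁻ ω, ENNReal.ofReal (‖S ω + T ω‖ ^ 2) ∂μ
        ≤ ∫⁻ ω, (ENNReal.ofReal 2 * ENNReal.ofReal (‖S ω‖ ^ 2)
            + ENNReal.ofReal 2 * ENNReal.ofReal (‖T ω‖ ^ 2)) ∂μ :=
          lintegral_mono hptfinal
      _ = ENNReal.ofReal 2 * ∫⁻ ω, ENNReal.ofReal (‖S ω‖ ^ 2) ∂μ
            + ENNReal.ofReal 2 * ∫⁻ ω, ENNReal.ofReal (‖T ω‖ ^ 2) ∂μ := by
          rw [lintegral_add_left' (hSaem.const_mul _),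
              lintegral_const_mul' _ _ ENNReal.ofReal_ne_top,
              lintegral_const_mul' _ _ ENNReal.ofReal_ne_top]
      _ ≤ ENNReal.ofReal 2 * ENNReal.ofReal (A ^ 2 * m)
            + ENNReal.ofReal 2 * ENNReal.ofReal
              (B * ∑ ℓ ∈ Finset.Icc 1 k, ‖π ℓ‖ * ∑' i, Λ (d (k + 1 - ℓ) + i)) :=
          add_le_add (mul_le_mul_right hSbound _) (mul_le_mul_right hTbound _)
      _ = ENNReal.ofReal (2 * (A ^ 2 * m)
            + 2 * (B * ∑ ℓ ∈ Finset.Icc 1 k, ‖π ℓ‖ * ∑' i, Λ (d (k + 1 - ℓ) + i))) := by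
          rw [← ENNReal.ofReal_mul (by norm_num : (0:ℝ) ≤ 2),
              ← ENNReal.ofReal_mul (by norm_num : (0:ℝ) ≤ 2),
              ← ENNReal.ofReal_add hc1 hc2]
  have hTmeas : Measurable T :=
    Finset.measurable_sum _ fun ℓ _ => (π ℓ).continuous.measurable.comp (hymeas _ _)
  have haesm : AEStronglyMeasurable (fun ω => ‖S ω + T ω‖ ^ 2) μ :=
    (((hS2.aestronglyMeasurable.add hTmeas.aestronglyMeasurable).norm.aemeasurable).pow_const
      2).aestronglyMeasurable
  rw [show (fun ω => ‖S ω + ∑ ℓ ∈ Finset.Icc 1 k,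
        π ℓ (X (1 - (ℓ : ℤ)) ω - projSpan ν (d (k + 1 - ℓ)) (X (1 - (ℓ : ℤ)) ω))‖ ^ 2)
      = fun ω => ‖S ω + T ω‖ ^ 2 from rfl]
  rw [integral_eq_lintegral_of_nonneg_ae
    (Filter.Eventually.of_forall fun ω => by positivity) haesm]
  calc (∫⁻ ω, ENNReal.ofReal (‖S ω + T ω‖ ^ 2) ∂μ).toReal
      ≤ (ENNReal.ofReal (2 * (A ^ 2 * m)
          + 2 * (B * ∑ ℓ ∈ Finset.Icc 1 k, ‖π ℓ‖ * ∑' i, Λ (d (k + 1 - ℓ) + i)))).toReal :=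
        ENNReal.toReal_mono ENNReal.ofReal_ne_top hmain
    _ = 2 * (A ^ 2 * m)
          + 2 * (B * ∑ ℓ ∈ Finset.Icc 1 k, ‖π ℓ‖ * ∑' i, Λ (d (k + 1 - ℓ) + i)) :=
        ENNReal.toReal_ofReal (by linarith)
    _ = 2 * A ^ 2 * m
          + 2 * B * ∑ ℓ ∈ Finset.Icc 1 k, ‖π ℓ‖ * ∑' i, Λ (d (k + 1 - ℓ) + i) := by
        ring
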